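/- Let k ≥ 1, let C be a k×k real symmetric circulant matrix (C_{lm} = c_{(l−m) mod k} with c_m = c_{(k−m) mod k} for all m), and let α, β ∈ ℝ. Let A be the 2k×2k block matrix whose diagonal blocks are both C, whose top-right block has all entries α, and whose bottom-left block has all entries β. Fix 1 ≤ j ≤ k−1 and φ ∈ [0, 2π), and define θ₀ ∈ ℝ^{2k} by θ₀_m = 2π j m / k for 0 ≤ m ≤ k−1 and θ₀_{k+m} = 2π j m / k + φ for 0 ≤ m ≤ k−1. Then for every index i ∈ {0,…,2k−1}, ∑_{m=0}^{2k−1} A_{im} sin(θ₀_m − θ₀_i) = 0; that is, θ₀ is an equilibrium point of the homogeneous Kuramoto model with adjacency matrix A. -/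

import Mathlib

open Real Finset

/-- Sum of sines at equally spaced angles (nontrivial mode) vanishes. -/
private lemma sum_sin_mode_zero (k j : ℕ) (hj1 : 1 ≤ j) (hjk : j < k) (x : ℝ) :
    ∑ m : Fin k, Real.sin (x + 2 * Real.pi * j * (m : ℕ) / k) = 0 := by
  have hk0 : (0:ℕ) < k := lt_of_le_of_lt (Nat.zero_le j) hjk
  have hkR : (k : ℝ) ≠ 0 := Nat.cast_ne_zero.mpr hk0.ne'
  have hkC : (k : ℂ) ≠ 0 := Nat.cast_ne_zero.mpr hk0.ne'
  set ζ : ℂ := Complex.exp (2 * Real.pi * j / k * Complex.I) with hζ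
  have hζk : ζ ^ k = 1 := by
    rw [hζ, ← Complex.exp_nat_mul]
    have h1 : (k : ℂ) * (2 * Real.pi * j / k * Complex.I) = j * (2 * Real.pi * Complex.I) := by
      field_simp
    rw [h1, Complex.exp_nat_mul_two_pi_mul_I]
  have hζ1 : ζ ≠ 1 := by
    intro h
    rw [hζ, Complex.exp_eq_one_iff] at h
    obtain ⟨n, hn⟩ := h
    have hI : (2 * Real.pi * j / k : ℂ) = n * (2 * Real.pi) := by
      have := mul_right_cancel₀ Complex.I_ne_zero
        (by rw [hn]; ring : (2 * (Real.pi:ℂ) * j / k) * Complex.I = ((n:ℂ) * (2 * Real.pi)) * Complex.I)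
      exact this
    have hR : 2 * Real.pi * j / k = n * (2 * Real.pi) := by
      have : ((2 * Real.pi * j / k : ℝ) : ℂ) = ((n * (2 * Real.pi) : ℝ) : ℂ) := by
        push_cast
        convert hI using 2
      exact_mod_cast this
    have hpi := Real.pi_pos
    have hkpos : (0:ℝ) < k := Nat.cast_pos.mpr hk0
    have hjpos : (0:ℝ) < j := Nat.cast_pos.mpr hj1
    have hjk' : (j:ℝ) < k := Nat.cast_lt.mpr hjk
    have hjn : (j : ℝ) = n * k := by
      field_simp at hR
      nlinarith [hR]
    have h0 : (0:ℝ) < (n:ℝ) := by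
      by_contra h
      push_neg at h
      nlinarith
    have h1 : (n:ℝ) < 1 := by
      by_contra h
      push_neg at h
      nlinarith
    have h0' : (0:ℤ) < n := by exact_mod_cast h0
    have h1' : n < 1 := by exact_mod_cast h1
    omega
  have key : ∑ m : Fin k, Complex.exp ((x + 2 * Real.pi * j * (m:ℕ) / k : ℝ) * Complex.I) = 0 := by
    have hterm : ∀ m : Fin k,
        Complex.exp ((x + 2 * Real.pi * j * (m:ℕ) / k : ℝ) * Complex.I)
          = Complex.exp (x * Complex.I) * ζ ^ (m : ℕ) := by
      intro m
      rw [hζ, ← Complex.exp_nat_mul, ← Complex.exp_add]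
      congr 1
      push_cast
      field_simp
    rw [Finset.sum_congr rfl (fun m _ => hterm m), ← Finset.mul_sum]
    have hs : ∑ m : Fin k, ζ ^ (m:ℕ) = 0 := by
      rw [Fin.sum_univ_eq_sum_range (fun n => ζ ^ n) k, geom_sum_eq hζ1, hζk]
      simp
    rw [hs, mul_zero]
  have him : ∑ m : Fin k, Real.sin (x + 2 * Real.pi * j * (m : ℕ) / k)
      = (∑ m : Fin k, Complex.exp ((x + 2 * Real.pi * j * (m:ℕ) / k : ℝ) * Complex.I)).im := by
    rw [Complex.im_sum]
    exact Finset.sum_congr rfl fun m _ => (Complex.exp_ofReal_mul_I_im _).symm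
  rw [him, key]
  rfl

/-- Odd-symmetry sum for a symmetric circulant row vanishes. -/
private lemma circ_sum_zero (k : ℕ) [NeZero k] (c : Fin k → ℝ)
    (hsym : ∀ m : Fin k, c m = c (-m)) (j : ℕ) :
    ∑ m : Fin k, c m * Real.sin (2 * Real.pi * j * (m:ℕ) / k) = 0 := by
  set g : Fin k → ℝ := fun m => c m * Real.sin (2 * Real.pi * j * (m:ℕ) / k) with hg
  have hneg : ∀ m : Fin k, g (-m) = -g m := by
    intro m
    rcases eq_or_ne m 0 with h0 | h0
    · subst h0; simp [hg]
    · have hv : ((-m : Fin k) : ℕ) = k - (m:ℕ) := by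
        have h3 : ((-m : Fin k):ℕ) = (k - (m:ℕ)) % k := rfl
        rw [h3, Nat.mod_eq_of_lt (Nat.sub_lt m.pos
          (Nat.pos_of_ne_zero (fun h => h0 (Fin.ext h))))]
      have hsin : Real.sin (2 * Real.pi * j * ((-m : Fin k):ℕ) / k)
          = -Real.sin (2 * Real.pi * j * (m:ℕ) / k) := by
        rw [hv]
        have hk0 : (k:ℝ) ≠ 0 := Nat.cast_ne_zero.mpr (NeZero.ne k)
        have harg : 2 * Real.pi * j * ((k - (m:ℕ) : ℕ):ℝ) / k
            = -(2 * Real.pi * j * (m:ℕ) / k) + (j:ℤ) * (2 * Real.pi) := by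
          have h2 : (m:ℕ) ≤ k := le_of_lt m.isLt
          have : ((k - (m:ℕ) : ℕ):ℝ) = (k:ℝ) - (m:ℕ) := by
            push_cast [Nat.cast_sub h2]; ring
          rw [this]; push_cast; field_simp; ring
        rw [harg, Real.sin_add_int_mul_two_pi, Real.sin_neg]
      rw [hg]
      simp only []
      rw [← hsym m, hsin]
      ring
  have h1 : ∑ m : Fin k, g m = ∑ m : Fin k, g (-m) :=
    (Equiv.sum_comp (Equiv.neg (Fin k)) g).symm
  have h2 : ∑ m : Fin k, g (-m) = -∑ m : Fin k, g m := by
    rw [Finset.sum_congr rfl (fun m _ => hneg m), Finset.sum_neg_distrib]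
  have := h1.trans h2
  linarith

/-- Periodicity: shifting the index by `p` in `Fin k` shifts the angle correctly. -/
private lemma sin_shift (k : ℕ) [NeZero k] (j : ℕ) (m p : Fin k) :
    Real.sin (2 * Real.pi * j * ((m + p : Fin k):ℕ) / k - 2 * Real.pi * j * (p:ℕ) / k)
      = Real.sin (2 * Real.pi * j * (m:ℕ) / k) := by
  have hk0 : (k:ℝ) ≠ 0 := Nat.cast_ne_zero.mpr (NeZero.ne k)
  have hv : ((m + p : Fin k) : ℕ) = ((m:ℕ) + p) % k := Fin.val_add m p
  set q : ℕ := ((m:ℕ) + p) / k with hq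
  have hmod : (m:ℕ) + p = k * q + ((m:ℕ) + p) % k := (Nat.div_add_mod _ _).symm
  have hnat : (m:ℕ) + (p:ℕ) = k * q + ((m + p : Fin k) : ℕ) := by
    rw [hv]; exact hmod
  have hreal : (((m + p : Fin k) : ℕ) : ℝ) = (m:ℕ) + (p:ℕ) - k * q := by
    have := congrArg (fun n : ℕ => (n:ℝ)) hnat
    push_cast at this
    linarith
  have harg : 2 * Real.pi * j * ((m + p : Fin k):ℕ) / k - 2 * Real.pi * j * (p:ℕ) / k
      = 2 * Real.pi * j * (m:ℕ) / k + ((-(j * q) : ℤ) : ℝ) * (2 * Real.pi) := by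
    rw [hreal]; push_cast; field_simp; ring
  rw [harg, Real.sin_add_int_mul_two_pi]

/-- Join of two identical symmetric circulant networks: let `A` be the `2k × 2k` block
matrix with both diagonal blocks equal to a real symmetric circulant matrix `C`
(`c_m = c_{(k−m) mod k}`), top-right block constant `α` and bottom-left block constant `β`.
For `1 ≤ j ≤ k − 1` and `φ ∈ [0, 2π)`, the point `θ₀` defined by `θ₀_m = 2πjm/k` on the
first layer and `θ₀_{k+m} = 2πjm/k + φ` on the second layer is an equilibrium point of
the homogeneous Kuramoto model with adjacency matrix `A`:
`∑_m A_{im} sin(θ₀_m − θ₀_i) = 0` for every `i`. -/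
theorem join_identical_circulant_equilibrium (k : ℕ) (hk : 1 ≤ k) (c : Fin k → ℝ)
    (hsym : ∀ m : Fin k, c m = c (-m)) (α β : ℝ)
    (j : ℕ) (hj1 : 1 ≤ j) (hj2 : j ≤ k - 1)
    (φ : ℝ) (hφ0 : 0 ≤ φ) (hφ2 : φ < 2 * Real.pi) :
    let A : Matrix (Fin k ⊕ Fin k) (Fin k ⊕ Fin k) ℝ :=
      Matrix.fromBlocks (Matrix.circulant c) (Matrix.of fun _ _ => α)
        (Matrix.of fun _ _ => β) (Matrix.circulant c)
    let θ : Fin k ⊕ Fin k → ℝ :=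
      Sum.elim (fun m : Fin k => 2 * Real.pi * j * (m : ℕ) / k)
        (fun m : Fin k => 2 * Real.pi * j * (m : ℕ) / k + φ)
    ∀ i : Fin k ⊕ Fin k, ∑ m : Fin k ⊕ Fin k, A i m * Real.sin (θ m - θ i) = 0 := by
  intro A θ i
  haveI : NeZero k := ⟨by omega⟩
  have hjk : j < k := by omega
  -- the circulant part vanishes for any row p
  have hcirc : ∀ p : Fin k,
      ∑ m : Fin k, c (p - m) * Real.sin (2 * Real.pi * j * (m:ℕ) / k
        - 2 * Real.pi * j * (p:ℕ) / k) = 0 := by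
    intro p
    set f : Fin k → ℝ := fun m => c (p - m) * Real.sin (2 * Real.pi * j * (m:ℕ) / k
        - 2 * Real.pi * j * (p:ℕ) / k) with hf
    have hre : ∑ m : Fin k, f m = ∑ m : Fin k, f (m + p) :=
      (Equiv.sum_comp (Equiv.addRight p) f).symm
    have hterm : ∀ m : Fin k, f (m + p) = c m * Real.sin (2 * Real.pi * j * (m:ℕ) / k) := by
      intro m
      have h1 : p - (m + p) = -m := by abel
      rw [hf]
      simp only []
      rw [h1, sin_shift k j m p, ← hsym m]
    rw [hre, Finset.sum_congr rfl fun m _ => hterm m]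
    exact circ_sum_zero k c hsym j
  rcases i with p | p
  · -- first layer
    have hA : ∑ m : Fin k ⊕ Fin k, A (Sum.inl p) m * Real.sin (θ m - θ (Sum.inl p))
        = ∑ m : Fin k, c (p - m) * Real.sin (2 * Real.pi * j * (m:ℕ) / k
            - 2 * Real.pi * j * (p:ℕ) / k)
          + ∑ m : Fin k, α * Real.sin ((φ - 2 * Real.pi * j * (p:ℕ) / k)
            + 2 * Real.pi * j * (m:ℕ) / k) := by
      rw [Fintype.sum_sum_type]
      refine congrArg₂ (· + ·) ?_ ?_
      · exact Finset.sum_congr rfl fun m _ => by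
          simp [A, θ, Matrix.circulant_apply]
      · exact Finset.sum_congr rfl fun m _ => by
          simp only [A, θ, Matrix.fromBlocks_apply₁₂, Matrix.of_apply, Sum.elim_inl, Sum.elim_inr]
          have : 2 * Real.pi * j * (m:ℕ) / k + φ - 2 * Real.pi * j * (p:ℕ) / k
              = (φ - 2 * Real.pi * j * (p:ℕ) / k) + 2 * Real.pi * j * (m:ℕ) / k := by ring
          rw [this]
    rw [hA, hcirc p, ← Finset.mul_sum, sum_sin_mode_zero k j hj1 hjk]
    ring
  · -- second layer
    have hA : ∑ m : Fin k ⊕ Fin k, A (Sum.inr p) m * Real.sin (θ m - θ (Sum.inr p))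
        = ∑ m : Fin k, β * Real.sin ((-(2 * Real.pi * j * (p:ℕ) / k) - φ)
            + 2 * Real.pi * j * (m:ℕ) / k)
          + ∑ m : Fin k, c (p - m) * Real.sin (2 * Real.pi * j * (m:ℕ) / k
            - 2 * Real.pi * j * (p:ℕ) / k) := by
      rw [Fintype.sum_sum_type]
      refine congrArg₂ (· + ·) ?_ ?_
      · exact Finset.sum_congr rfl fun m _ => by
          simp only [A, θ, Matrix.fromBlocks_apply₂₁, Matrix.of_apply, Sum.elim_inl, Sum.elim_inr]
          have : 2 * Real.pi * j * (m:ℕ) / k - (2 * Real.pi * j * (p:ℕ) / k + φ)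
              = (-(2 * Real.pi * j * (p:ℕ) / k) - φ) + 2 * Real.pi * j * (m:ℕ) / k := by ring
          rw [this]
      · exact Finset.sum_congr rfl fun m _ => by
          simp only [A, θ, Matrix.fromBlocks_apply₂₂, Matrix.circulant_apply, Sum.elim_inr]
          have : 2 * Real.pi * j * (m:ℕ) / k + φ - (2 * Real.pi * j * (p:ℕ) / k + φ)
              = 2 * Real.pi * j * (m:ℕ) / k - 2 * Real.pi * j * (p:ℕ) / k := by ring
          rw [this]
    rw [hA, hcirc p, ← Finset.mul_sum, sum_sin_mode_zero k j hj1 hjk]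
    ring
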